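/- Let X ⊆ ℚ be partitioned into two disjoint nonempty subsets X = X₋ ∪ X₊ with every element of X₋ strictly less than every element of X₊. Suppose α, β ∈ ℝ are, respectively, the least upper bound of X₋ and the greatest lower bound of X₊ (viewing X₋, X₊ as subsets of ℝ), and that neither α nor β equals any element of X. Then there exists a non-regular order-preserving map f : ℚ → ℚ whose image, with the order induced from ℚ, is order-isomorphic to the ordered set X. -/

import Mathlib

noncomputable section


def s13t (q : ℚ) : ℚ := q / (1 + |q|)

lemma s13t_lt_one (q : ℚ) : s13t q < 1 := by
  rw [s13t, div_lt_one (by positivity)]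
  linarith [le_abs_self q]

lemma s13t_gt_neg_one (q : ℚ) : -1 < s13t q := by
  rw [s13t, lt_div_iff₀ (by positivity)]
  linarith [neg_abs_le q]

lemma s13t_mono : StrictMono s13t := by
  intro a b hab
  rw [s13t, s13t, div_lt_div_iff₀ (by positivity) (by positivity)]
  rcases abs_cases a with ⟨h1, h2⟩ | ⟨h1, h2⟩ <;>
    rcases abs_cases b with ⟨h3, h4⟩ | ⟨h3, h4⟩ <;> nlinarith

lemma s13lex_dense (L : Type) [LinearOrder L] : DenselyOrdered (L ×ₗ ℚ) := by
  constructor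
  intro a b hab
  rcases Prod.Lex.lt_iff.mp hab with h | ⟨h1, h2⟩
  · refine ⟨toLex ((ofLex a).1, (ofLex a).2 + 1), ?_, ?_⟩
    · exact Prod.Lex.lt_iff.mpr (Or.inr ⟨rfl, lt_add_one _⟩)
    · exact Prod.Lex.lt_iff.mpr (Or.inl h)
  · obtain ⟨m, hm1, hm2⟩ := exists_between h2
    refine ⟨toLex ((ofLex a).1, m), ?_, ?_⟩
    · exact Prod.Lex.lt_iff.mpr (Or.inr ⟨rfl, hm1⟩)
    · exact Prod.Lex.lt_iff.mpr (Or.inr ⟨h1, hm2⟩)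

lemma s13lex_nomax (L : Type) [LinearOrder L] : NoMaxOrder (L ×ₗ ℚ) := by
  constructor
  intro a
  exact ⟨toLex ((ofLex a).1, (ofLex a).2 + 1),
    Prod.Lex.lt_iff.mpr (Or.inr ⟨rfl, lt_add_one _⟩)⟩

lemma s13lex_nomin (L : Type) [LinearOrder L] : NoMinOrder (L ×ₗ ℚ) := by
  constructor
  intro a
  exact ⟨toLex ((ofLex a).1, (ofLex a).2 - 1),
    Prod.Lex.lt_iff.mpr (Or.inr ⟨rfl, sub_one_lt _⟩)⟩

lemma s13lex_fst_mono {L : Type} [LinearOrder L] {u v : L ×ₗ ℚ} (h : u ≤ v) :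
    (ofLex u).1 ≤ (ofLex v).1 := by
  rcases Prod.Lex.le_iff.mp h with h | ⟨h, _⟩
  · exact le_of_lt h
  · exact le_of_eq h

lemma s13_rat_ne_sqrt2 (q : ℚ) : (q : ℝ) ≠ Real.sqrt 2 := fun h =>
  irrational_sqrt_two ⟨q, h⟩

lemma s13_B_gt (q : ℚ) (h : ¬ ((q : ℝ) < Real.sqrt 2)) : Real.sqrt 2 < (q : ℝ) :=
  lt_of_le_of_ne (not_lt.mp h) (Ne.symm (s13_rat_ne_sqrt2 q))

lemma s13A_dense : DenselyOrdered {q : ℚ // (q : ℝ) < Real.sqrt 2} := by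
  constructor
  rintro ⟨a, ha⟩ ⟨b, hb⟩ hab
  rw [Subtype.mk_lt_mk] at hab
  obtain ⟨m, hm1, hm2⟩ := exists_between hab
  exact ⟨⟨m, lt_trans (by exact_mod_cast hm2) hb⟩, hm1, hm2⟩

lemma s13A_nomax : NoMaxOrder {q : ℚ // (q : ℝ) < Real.sqrt 2} := by
  constructor
  rintro ⟨a, ha⟩
  obtain ⟨r, hr1, hr2⟩ := exists_rat_btwn ha
  exact ⟨⟨r, hr2⟩, by exact_mod_cast hr1⟩

lemma s13A_nomin : NoMinOrder {q : ℚ // (q : ℝ) < Real.sqrt 2} := by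
  constructor
  rintro ⟨a, ha⟩
  refine ⟨⟨a - 1, ?_⟩, ?_⟩
  · push_cast; linarith
  · show a - 1 < a; linarith

lemma s13A_nonempty : Nonempty {q : ℚ // (q : ℝ) < Real.sqrt 2} := by
  refine ⟨⟨0, ?_⟩⟩
  rw [Rat.cast_zero]
  exact Real.sqrt_pos.mpr (by norm_num)

lemma s13B_dense : DenselyOrdered {q : ℚ // ¬ ((q : ℝ) < Real.sqrt 2)} := by
  constructor
  rintro ⟨a, ha⟩ ⟨b, hb⟩ hab
  rw [Subtype.mk_lt_mk] at hab
  obtain ⟨m, hm1, hm2⟩ := exists_between hab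
  refine ⟨⟨m, not_lt.mpr ?_⟩, hm1, hm2⟩
  · exact le_trans (le_of_lt (s13_B_gt a ha)) (by exact_mod_cast le_of_lt hm1)

lemma s13B_nomin : NoMinOrder {q : ℚ // ¬ ((q : ℝ) < Real.sqrt 2)} := by
  constructor
  rintro ⟨a, ha⟩
  obtain ⟨r, hr1, hr2⟩ := exists_rat_btwn (s13_B_gt a ha)
  exact ⟨⟨r, not_lt.mpr (le_of_lt hr1)⟩, by exact_mod_cast hr2⟩

lemma s13B_nomax : NoMaxOrder {q : ℚ // ¬ ((q : ℝ) < Real.sqrt 2)} := by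
  constructor
  rintro ⟨a, ha⟩
  refine ⟨⟨a + 1, ?_⟩, ?_⟩
  · push_cast
    exact not_lt.mpr (by linarith [not_lt.mp ha])
  · show a < a + 1; linarith

lemma s13_sqrt2_lt_two : Real.sqrt 2 < 2 := by
  nlinarith [Real.sq_sqrt (by norm_num : (2:ℝ) ≥ 0), Real.sqrt_nonneg 2]

lemma s13B_nonempty : Nonempty {q : ℚ // ¬ ((q : ℝ) < Real.sqrt 2)} := by
  refine ⟨⟨2, not_lt.mpr ?_⟩⟩
  rw [Rat.cast_ofNat]
  exact le_of_lt s13_sqrt2_lt_two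

def s13F (Xm Xp : Set ℚ)
    (φ : {q : ℚ // (q : ℝ) < Real.sqrt 2} ≃o (↥Xm ×ₗ ℚ))
    (ψ : {q : ℚ // ¬ ((q : ℝ) < Real.sqrt 2)} ≃o (↥Xp ×ₗ ℚ)) : ℚ → ℚ :=
  fun q =>
    if h : (q : ℝ) < Real.sqrt 2 then s13t ((ofLex (φ ⟨q, h⟩)).1 : ℚ) - 2
    else s13t ((ofLex (ψ ⟨q, h⟩)).1 : ℚ) + 2


section
variable (Xm Xp : Set ℚ)
    (φ : {q : ℚ // (q : ℝ) < Real.sqrt 2} ≃o (↥Xm ×ₗ ℚ))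
    (ψ : {q : ℚ // ¬ ((q : ℝ) < Real.sqrt 2)} ≃o (↥Xp ×ₗ ℚ))

lemma s13F_mono : Monotone (s13F Xm Xp φ ψ) := by
  intro q q' hqq'
  unfold s13F
  by_cases h : (q : ℝ) < Real.sqrt 2 <;> by_cases h' : (q' : ℝ) < Real.sqrt 2
  · rw [dif_pos h, dif_pos h']
    have h1 : (⟨q, h⟩ : {q : ℚ // (q : ℝ) < Real.sqrt 2}) ≤ ⟨q', h'⟩ :=
      Subtype.mk_le_mk.mpr hqq'
    have h2 := s13lex_fst_mono (φ.le_iff_le.mpr h1)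
    have h3 : ((ofLex (φ ⟨q, h⟩)).1 : ℚ) ≤ ((ofLex (φ ⟨q', h'⟩)).1 : ℚ) :=
      Subtype.coe_le_coe.mpr h2
    have := s13t_mono.monotone h3
    linarith
  · rw [dif_pos h, dif_neg h']
    have := s13t_lt_one ((ofLex (φ ⟨q, h⟩)).1 : ℚ)
    have := s13t_gt_neg_one ((ofLex (ψ ⟨q', h'⟩)).1 : ℚ)
    linarith
  · exact absurd (lt_of_le_of_lt (by exact_mod_cast hqq' : (q : ℝ) ≤ (q' : ℝ)) h') h
  · rw [dif_neg h, dif_neg h']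
    have h1 : (⟨q, h⟩ : {q : ℚ // ¬ ((q : ℝ) < Real.sqrt 2)}) ≤ ⟨q', h'⟩ :=
      Subtype.mk_le_mk.mpr hqq'
    have h2 := s13lex_fst_mono (ψ.le_iff_le.mpr h1)
    have h3 : ((ofLex (ψ ⟨q, h⟩)).1 : ℚ) ≤ ((ofLex (ψ ⟨q', h'⟩)).1 : ℚ) :=
      Subtype.coe_le_coe.mpr h2
    have := s13t_mono.monotone h3
    linarith

lemma s13F_at_m (x : ↥Xm) :
    s13F Xm Xp φ ψ ((φ.symm (toLex (x, 0))).val) = s13t (x : ℚ) - 2 := by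
  have h : (((φ.symm (toLex (x, 0))).val : ℚ) : ℝ) < Real.sqrt 2 :=
    (φ.symm (toLex (x, 0))).prop
  rw [s13F, dif_pos h]
  have : (⟨(φ.symm (toLex (x, 0))).val, h⟩ : {q : ℚ // (q : ℝ) < Real.sqrt 2})
      = φ.symm (toLex (x, 0)) := rfl
  rw [this, OrderIso.apply_symm_apply]
  rfl

lemma s13F_at_p (y : ↥Xp) :
    s13F Xm Xp φ ψ ((ψ.symm (toLex (y, 0))).val) = s13t (y : ℚ) + 2 := by
  have h : ¬ ((((ψ.symm (toLex (y, 0))).val : ℚ) : ℝ) < Real.sqrt 2) :=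
    (ψ.symm (toLex (y, 0))).prop
  rw [s13F, dif_neg h]
  have : (⟨(ψ.symm (toLex (y, 0))).val, h⟩ : {q : ℚ // ¬ ((q : ℝ) < Real.sqrt 2)})
      = ψ.symm (toLex (y, 0)) := rfl
  rw [this, OrderIso.apply_symm_apply]
  rfl

lemma s13F_det_m {w : ℚ} {x : ↥Xm} (hw : s13F Xm Xp φ ψ w = s13t (x : ℚ) - 2) :
    ∃ h : (w : ℝ) < Real.sqrt 2, (ofLex (φ ⟨w, h⟩)).1 = x := by
  by_cases h : (w : ℝ) < Real.sqrt 2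
  · refine ⟨h, ?_⟩
    rw [s13F, dif_pos h] at hw
    have : s13t ((ofLex (φ ⟨w, h⟩)).1 : ℚ) = s13t (x : ℚ) := by linarith
    exact Subtype.ext (s13t_mono.injective this)
  · exfalso
    rw [s13F, dif_neg h] at hw
    have := s13t_gt_neg_one ((ofLex (ψ ⟨w, h⟩)).1 : ℚ)
    have := s13t_lt_one (x : ℚ)
    linarith

lemma s13F_det_p {w : ℚ} {y : ↥Xp} (hw : s13F Xm Xp φ ψ w = s13t (y : ℚ) + 2) :
    ∃ h : ¬ ((w : ℝ) < Real.sqrt 2), (ofLex (ψ ⟨w, h⟩)).1 = y := by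
  by_cases h : (w : ℝ) < Real.sqrt 2
  · exfalso
    rw [s13F, dif_pos h] at hw
    have := s13t_lt_one ((ofLex (φ ⟨w, h⟩)).1 : ℚ)
    have := s13t_gt_neg_one (y : ℚ)
    linarith
  · refine ⟨h, ?_⟩
    rw [s13F, dif_neg h] at hw
    have : s13t ((ofLex (ψ ⟨w, h⟩)).1 : ℚ) = s13t (y : ℚ) := by linarith
    exact Subtype.ext (s13t_mono.injective this)

lemma s13F_nonregular
    (hnomax : ∀ x ∈ Xm, ∃ x' ∈ Xm, x < x')
    (hnomin : ∀ y ∈ Xp, ∃ y' ∈ Xp, y' < y) :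
    ¬ (∃ g : ℚ → ℚ, Monotone g ∧
        (s13F Xm Xp φ ψ) ∘ g ∘ (s13F Xm Xp φ ψ) = s13F Xm Xp φ ψ) := by
  rintro ⟨g, hg, hfgf⟩
  have key_m : ∀ x : ↥Xm, ∃ h : ((g (s13t (x : ℚ) - 2) : ℚ) : ℝ) < Real.sqrt 2,
      (ofLex (φ ⟨g (s13t (x : ℚ) - 2), h⟩)).1 = x := by
    intro x
    have h1 := congrFun hfgf ((φ.symm (toLex (x, 0))).val)
    simp only [Function.comp_apply] at h1
    rw [s13F_at_m Xm Xp φ ψ x] at h1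
    exact s13F_det_m Xm Xp φ ψ h1
  have key_p : ∀ y : ↥Xp, ∃ h : ¬ (((g (s13t (y : ℚ) + 2) : ℚ) : ℝ) < Real.sqrt 2),
      (ofLex (ψ ⟨g (s13t (y : ℚ) + 2), h⟩)).1 = y := by
    intro y
    have h1 := congrFun hfgf ((ψ.symm (toLex (y, 0))).val)
    simp only [Function.comp_apply] at h1
    rw [s13F_at_p Xm Xp φ ψ y] at h1
    exact s13F_det_p Xm Xp φ ψ h1
  by_cases hg0 : ((g 0 : ℚ) : ℝ) < Real.sqrt 2
  · set s₀ : ↥Xm := (ofLex (φ ⟨g 0, hg0⟩)).1 with hs₀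
    obtain ⟨x', hx'mem, hx'⟩ := hnomax (s₀ : ℚ) s₀.prop
    obtain ⟨hw, hfst⟩ := key_m ⟨x', hx'mem⟩
    set w := g (s13t ((⟨x', hx'mem⟩ : ↥Xm) : ℚ) - 2) with hwdef
    have hle : w ≤ g 0 := by
      apply hg
      have := s13t_lt_one (x' : ℚ)
      linarith
    have h1 : (⟨w, hw⟩ : {q : ℚ // (q : ℝ) < Real.sqrt 2}) ≤ ⟨g 0, hg0⟩ :=
      Subtype.mk_le_mk.mpr hle
    have h2 := s13lex_fst_mono (φ.le_iff_le.mpr h1)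
    rw [hfst] at h2
    have : x' ≤ (s₀ : ℚ) := h2
    exact absurd hx' (not_lt.mpr this)
  · set s₁ : ↥Xp := (ofLex (ψ ⟨g 0, hg0⟩)).1 with hs₁
    obtain ⟨y', hy'mem, hy'⟩ := hnomin (s₁ : ℚ) s₁.prop
    obtain ⟨hw, hfst⟩ := key_p ⟨y', hy'mem⟩
    set w := g (s13t ((⟨y', hy'mem⟩ : ↥Xp) : ℚ) + 2) with hwdef
    have hle : g 0 ≤ w := by
      apply hg
      have := s13t_gt_neg_one (y' : ℚ)
      linarith
    have h1 : (⟨g 0, hg0⟩ : {q : ℚ // ¬ ((q : ℝ) < Real.sqrt 2)}) ≤ ⟨w, hw⟩ :=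
      Subtype.mk_le_mk.mpr hle
    have h2 := s13lex_fst_mono (ψ.le_iff_le.mpr h1)
    rw [hfst] at h2
    have : (s₁ : ℚ) ≤ y' := h2
    exact absurd hy' (not_lt.mpr this)

open Classical in
def s13E (X Xm : Set ℚ) : ↥X → ℚ :=
  fun x => if (x : ℚ) ∈ Xm then s13t (x : ℚ) - 2 else s13t (x : ℚ) + 2

lemma s13E_strictMono (X : Set ℚ) (hunion : X = Xm ∪ Xp)
    (hlt : ∀ a ∈ Xm, ∀ b ∈ Xp, a < b) : StrictMono (s13E X Xm) := by
  intro a b hab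
  have hab' : (a : ℚ) < (b : ℚ) := Subtype.coe_lt_coe.mpr hab
  by_cases ha : (a : ℚ) ∈ Xm <;> by_cases hb : (b : ℚ) ∈ Xm
  · simp only [s13E, if_pos ha, if_pos hb]
    have := s13t_mono hab'
    linarith
  · simp only [s13E, if_pos ha, if_neg hb]
    have := s13t_lt_one (a : ℚ)
    have := s13t_gt_neg_one (b : ℚ)
    linarith
  · exfalso
    have haX : (a : ℚ) ∈ Xm ∪ Xp := (Set.ext_iff.mp hunion _).mp a.prop
    have haP : (a : ℚ) ∈ Xp := haX.resolve_left ha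
    exact absurd (hlt _ hb _ haP) (not_lt.mpr (le_of_lt hab'))
  · have haX : (a : ℚ) ∈ Xm ∪ Xp := (Set.ext_iff.mp hunion _).mp a.prop
    have haP : (a : ℚ) ∈ Xp := haX.resolve_left ha
    simp only [s13E, if_neg ha, if_neg hb]
    have := s13t_mono hab'
    linarith

lemma s13range (X : Set ℚ) (hunion : X = Xm ∪ Xp) (hdisj : Disjoint Xm Xp) :
    Set.range (s13F Xm Xp φ ψ) = Set.range (s13E X Xm) := by
  ext r
  constructor
  · rintro ⟨q, rfl⟩
    by_cases h : (q : ℝ) < Real.sqrt 2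
    · set x : ↥Xm := (ofLex (φ ⟨q, h⟩)).1 with hx
      have hxX : (x : ℚ) ∈ X := by rw [hunion]; exact Or.inl x.prop
      refine ⟨⟨(x : ℚ), hxX⟩, ?_⟩
      show s13E X Xm ⟨(x : ℚ), hxX⟩ = s13F Xm Xp φ ψ q
      rw [s13F, dif_pos h]
      simp only [s13E, if_pos x.prop]
      rfl
    · set x : ↥Xp := (ofLex (ψ ⟨q, h⟩)).1 with hx
      have hxX : (x : ℚ) ∈ X := by rw [hunion]; exact Or.inr x.prop
      refine ⟨⟨(x : ℚ), hxX⟩, ?_⟩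
      show s13E X Xm ⟨(x : ℚ), hxX⟩ = s13F Xm Xp φ ψ q
      rw [s13F, dif_neg h]
      have hnot : (x : ℚ) ∉ Xm := fun hmem => Set.disjoint_left.mp hdisj hmem x.prop
      simp only [s13E, if_neg hnot]
      rfl
  · rintro ⟨x, rfl⟩
    by_cases hxm : (x : ℚ) ∈ Xm
    · refine ⟨(φ.symm (toLex ((⟨(x : ℚ), hxm⟩ : ↥Xm), 0))).val, ?_⟩
      rw [s13F_at_m]
      simp only [s13E, if_pos hxm]
    · have hxX : (x : ℚ) ∈ Xm ∪ Xp := (Set.ext_iff.mp hunion _).mp x.prop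
      have hxp : (x : ℚ) ∈ Xp := hxX.resolve_left hxm
      refine ⟨(ψ.symm (toLex ((⟨(x : ℚ), hxp⟩ : ↥Xp), 0))).val, ?_⟩
      rw [s13F_at_p]
      simp only [s13E, if_neg hxm]

end
end

/-- if `X ⊆ ℚ` splits as `X₋ ∪ X₊` with `X₋ < X₊`, both parts
nonempty, and neither `sup X₋` nor `inf X₊` (computed in ℝ) belongs to `X`,
then there is a non-regular order-preserving map `ℚ → ℚ` whose image is
order-isomorphic to `X`. -/
theorem stmt_13 (X Xm Xp : Set ℚ) (hm : Xm.Nonempty) (hp : Xp.Nonempty)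
    (hunion : X = Xm ∪ Xp) (hdisj : Disjoint Xm Xp)
    (hlt : ∀ a ∈ Xm, ∀ b ∈ Xp, a < b)
    (α β : ℝ)
    (hα : IsLUB (((↑) : ℚ → ℝ) '' Xm) α)
    (hβ : IsGLB (((↑) : ℚ → ℝ) '' Xp) β)
    (hαX : ∀ x ∈ X, (x : ℝ) ≠ α)
    (hβX : ∀ x ∈ X, (x : ℝ) ≠ β) :
    ∃ f : ℚ → ℚ, Monotone f ∧
      ¬ (∃ g : ℚ → ℚ, Monotone g ∧ f ∘ g ∘ f = f) ∧
      Nonempty (↥(Set.range f) ≃o ↥X) := by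
  classical
  have hXmmax : ∀ x ∈ Xm, ∃ x' ∈ Xm, x < x' := by
    intro x hx
    by_contra hcon
    push_neg at hcon
    have hub : (x : ℝ) ∈ upperBounds (((↑) : ℚ → ℝ) '' Xm) := by
      rintro r ⟨y, hy, rfl⟩
      exact_mod_cast hcon y hy
    have h1 : α ≤ (x : ℝ) := hα.2 hub
    have h2 : (x : ℝ) ≤ α := hα.1 ⟨x, hx, rfl⟩
    exact hαX x (by rw [hunion]; exact Or.inl hx) (le_antisymm h2 h1)
  have hXpmin : ∀ y ∈ Xp, ∃ y' ∈ Xp, y' < y := by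
    intro y hy
    by_contra hcon
    push_neg at hcon
    have hlb : (y : ℝ) ∈ lowerBounds (((↑) : ℚ → ℝ) '' Xp) := by
      rintro r ⟨z, hz, rfl⟩
      exact_mod_cast hcon z hz
    have h1 : (y : ℝ) ≤ β := hβ.2 hlb
    have h2 : β ≤ (y : ℝ) := hβ.1 ⟨y, hy, rfl⟩
    exact hβX y (by rw [hunion]; exact Or.inr hy) (le_antisymm h1 h2)
  haveI := s13A_dense
  haveI := s13A_nomax
  haveI := s13A_nomin
  haveI := s13A_nonempty
  haveI := s13B_dense
  haveI := s13B_nomax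
  haveI := s13B_nomin
  haveI := s13B_nonempty
  haveI : Nonempty ↥Xm := hm.to_subtype
  haveI : Nonempty ↥Xp := hp.to_subtype
  haveI := s13lex_dense ↥Xm
  haveI := s13lex_nomax ↥Xm
  haveI := s13lex_nomin ↥Xm
  haveI := s13lex_dense ↥Xp
  haveI := s13lex_nomax ↥Xp
  haveI := s13lex_nomin ↥Xp
  haveI : Countable (↥Xm ×ₗ ℚ) := inferInstanceAs (Countable (↥Xm × ℚ))
  haveI : Countable (↥Xp ×ₗ ℚ) := inferInstanceAs (Countable (↥Xp × ℚ))
  haveI : Nonempty (↥Xm ×ₗ ℚ) := inferInstanceAs (Nonempty (↥Xm × ℚ))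
  haveI : Nonempty (↥Xp ×ₗ ℚ) := inferInstanceAs (Nonempty (↥Xp × ℚ))
  obtain ⟨φ⟩ := Order.iso_of_countable_dense
    (α := {q : ℚ // (q : ℝ) < Real.sqrt 2}) (β := ↥Xm ×ₗ ℚ)
  obtain ⟨ψ⟩ := Order.iso_of_countable_dense
    (α := {q : ℚ // ¬ ((q : ℝ) < Real.sqrt 2)}) (β := ↥Xp ×ₗ ℚ)
  refine ⟨s13F Xm Xp φ ψ, s13F_mono Xm Xp φ ψ,
    s13F_nonregular Xm Xp φ ψ hXmmax hXpmin, ?_⟩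
  have hrange := s13range Xm Xp φ ψ X hunion hdisj
  exact ⟨(OrderIso.setCongr _ _ hrange).trans
    (StrictMono.orderIso _ (s13E_strictMono Xm Xp X hunion hlt)).symm⟩
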